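/- If f: X → Y is a shy map between digital images that is also injective, then f is an isomorphism. -/

import Mathlib

/-- A subset `A` is connected under adjacency `κ` if any two of its points are
joined by a path within `A` whose consecutive points are `κ`-adjacent. -/
def DConn {X : Type*} (κ : X → X → Prop) (A : Set X) : Prop :=
  ∀ a ∈ A, ∀ b ∈ A,
    Relation.ReflTransGen (fun u v => κ u v ∧ u ∈ A ∧ v ∈ A) a b

/-- `f` is digitally continuous if images of connected sets are connected. -/
def DCont {X Y : Type*} (κ : X → X → Prop) (lam : Y → Y → Prop) (f : X → Y) : Prop :=
  ∀ A : Set X, DConn κ A → DConn lam (f '' A)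

/-- `f` is shy: a continuous surjection with connected point preimages and
connected preimages of adjacent pairs. -/
def DShy {X Y : Type*} (κ : X → X → Prop) (lam : Y → Y → Prop) (f : X → Y) : Prop :=
  DCont κ lam f ∧ Function.Surjective f ∧
    (∀ y : Y, DConn κ (f ⁻¹' {y})) ∧
    ∀ y₀ y₁ : Y, lam y₀ y₁ → DConn κ (f ⁻¹' {y₀, y₁})

theorem injective_shy_is_isomorphism {X Y : Type*}
    (κ : X → X → Prop) (lam : Y → Y → Prop)
    (hκs : Symmetric κ) (hκi : Irreflexive κ)
    (hls : Symmetric lam) (hli : Irreflexive lam)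
    (f : X → Y) (hshy : DShy κ lam f) (hinj : Function.Injective f) :
    Function.Bijective f ∧
      ∃ g : Y → X, DCont lam κ g ∧
        Function.LeftInverse g f ∧ Function.RightInverse g f := by
  obtain ⟨hcont, hsurj, hpt, hpair⟩ := hshy
  let e := Equiv.ofBijective f ⟨hinj, hsurj⟩
  set g := e.symm with hg
  have hgf : Function.LeftInverse g f := fun x => e.symm_apply_apply x
  have hfg : Function.RightInverse g f := fun y => e.apply_symm_apply y
  refine ⟨⟨hinj, hsurj⟩, g, ?_, hgf, hfg⟩
  intro B hB a ha b hb
  obtain ⟨ya, hya, rfl⟩ := ha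
  obtain ⟨yb, hyb, rfl⟩ := hb
  have hpath := hB ya hya yb hyb
  clear hyb
  induction hpath with
  | refl => exact Relation.ReflTransGen.refl
  | tail hst hstep ih =>
    rename_i c d
    obtain ⟨hlam, hcB, hdB⟩ := hstep
    refine ih.trans ?_
    have hconn := hpair c d hlam
    have h1 : g c ∈ f ⁻¹' {c, d} := by
      simp [Set.mem_preimage, hfg c]
    have h2 : g d ∈ f ⁻¹' {c, d} := by
      simp [Set.mem_preimage, hfg d]
    refine Relation.ReflTransGen.mono ?_ _ _ (hconn (g c) h1 (g d) h2)
    rintro u v ⟨huv, hu, hv⟩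
    have memB : ∀ w : X, w ∈ f ⁻¹' ({c, d} : Set Y) → w ∈ g '' B := by
      intro w hw
      rcases hw with h | h
      · exact ⟨c, hcB, by rw [← h, hgf w]⟩
      · exact ⟨d, hdB, by rw [← h, hgf w]⟩
    exact ⟨huv, memB u hu, memB v hv⟩
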